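/- Let R be a discrete valuation ring with uniformizer π and let f = X^{2n+1} + a_{2n}X^{2n} + ⋯ + a₁X + a₀ ∈ R[X] be a monic polynomial of odd degree 2n+1 (n ≥ 1) such that π divides each of a₀, a₁ and a₂. Then π² divides Res(f, f'), the resultant of f and its derivative f'. -/

import Mathlib

open Polynomial

/-- The Sylvester matrix of `f` and `g`, viewed as polynomials of degree (at most)
`m` and `n` respectively: an `(m+n) × (m+n)` matrix whose first `n` rows are the
shifted coefficient vectors of `f` and whose last `m` rows are the shifted
coefficient vectors of `g`. -/
def sylvester {R : Type*} [CommRing R] (m n : ℕ) (f g : Polynomial R) :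
    Matrix (Fin (m + n)) (Fin (m + n)) R :=
  Matrix.of fun i j =>
    if (i : ℕ) < n then
      (if (i : ℕ) ≤ (j : ℕ) ∧ (j : ℕ) ≤ (i : ℕ) + m then f.coeff (m + i - j) else 0)
    else
      (if (i : ℕ) - n ≤ (j : ℕ) ∧ (j : ℕ) ≤ ((i : ℕ) - n) + n then
        g.coeff (n + ((i : ℕ) - n) - j) else 0)

/-- The resultant of `f` and `g` (of degrees `m` and `n`), the determinant of
their Sylvester matrix. -/
def resultant {R : Type*} [CommRing R] (m n : ℕ) (f g : Polynomial R) : R :=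
  (sylvester m n f g).det

/-- If two distinct columns of a square matrix are entrywise divisible by `p`,
then `p ^ 2` divides the determinant. -/
lemma sq_dvd_det_of_two_cols {R : Type*} [CommRing R] {k : ℕ}
    (M : Matrix (Fin k) (Fin k) R) (p : R) (j1 j2 : Fin k) (hj : j1 ≠ j2)
    (hc1 : ∀ i, p ∣ M i j1) (hc2 : ∀ i, p ∣ M i j2) : p ^ 2 ∣ M.det := by
  choose w1 hw1 using hc1
  choose w2 hw2 using hc2
  have e : M = (M.updateCol j1 (p • w1)).updateCol j2 (p • w2) := by
    ext i j
    by_cases h2 : j = j2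
    · subst h2; simp [Matrix.updateCol_apply, hw2 i]
    · by_cases h1 : j = j1
      · subst h1
        simp [Matrix.updateCol_apply, h2, hw1 i]
      · simp [Matrix.updateCol_apply, h1, h2]
  have comm : (M.updateCol j1 (p • w1)).updateCol j2 w2
      = ((M.updateCol j2 w2).updateCol j1 (p • w1)) := by
    ext i j
    by_cases h2 : j = j2
    · subst h2; simp [Matrix.updateCol_apply, Ne.symm hj]
    · by_cases h1 : j = j1
      · subst h1; simp [Matrix.updateCol_apply, h2]
      · simp [Matrix.updateCol_apply, h1, h2]
  rw [e, Matrix.det_updateCol_smul, comm, Matrix.det_updateCol_smul]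
  ring_nf
  exact Dvd.intro _ rfl

/-- Let `R` be a DVR with uniformizer `π` and let
`f = X^(2n+1) + a_{2n} X^(2n) + ⋯ + a₁ X + a₀` be monic of odd degree `2n+1`
with `π` dividing each of `a₀`, `a₁` and `a₂`.  Then `π²` divides `Res(f, f')`. -/
theorem dvr_sq_dvd_resultant_of_three_low_coeffs (R : Type*) [CommRing R] [IsDomain R]
    [IsDiscreteValuationRing R] (π : R) (hπ : Irreducible π)
    (n : ℕ) (hn : 1 ≤ n) (f : Polynomial R) (hmonic : f.Monic)
    (hdeg : f.natDegree = 2 * n + 1)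
    (h0 : π ∣ f.coeff 0) (h1 : π ∣ f.coeff 1) (h2 : π ∣ f.coeff 2) :
    π ^ 2 ∣ resultant (2 * n + 1) (2 * n) f (Polynomial.derivative f) := by
  have hd0 : π ∣ (Polynomial.derivative f).coeff 0 := by
    rw [Polynomial.coeff_derivative]; exact h1.mul_right _
  have hd1 : π ∣ (Polynomial.derivative f).coeff 1 := by
    rw [Polynomial.coeff_derivative]; exact h2.mul_right _
  have hf : ∀ c : ℕ, c ≤ 1 → π ∣ f.coeff c := by
    intro c hc; interval_cases c <;> assumption
  have hd : ∀ c : ℕ, c ≤ 1 → π ∣ (Polynomial.derivative f).coeff c := by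
    intro c hc; interval_cases c <;> assumption
  refine sq_dvd_det_of_two_cols _ π ⟨4 * n - 1, by omega⟩ ⟨4 * n, by omega⟩ ?_ ?_ ?_
  · intro h
    have := congrArg Fin.val h
    simp only at this
    omega
  · intro i
    simp only [_root_.sylvester, Matrix.of_apply]
    split_ifs with hi hcond hcond
    · exact hf _ (by omega)
    · exact dvd_zero _
    · exact hd _ (by omega)
    · exact dvd_zero _
  · intro i
    simp only [_root_.sylvester, Matrix.of_apply]
    split_ifs with hi hcond hcond
    · exact hf _ (by omega)
    · exact dvd_zero _
    · exact hd _ (by omega)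
    · exact dvd_zero _
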